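/- arXiv:1801.05582 — 3 statements merged into one kernel-verified Lean document; each statement's English description precedes it below -/
import Mathlib

section
/- Let H be a bounded self-adjoint operator on a Hilbert space ℋ, and let ω₀ not be an eigenvalue of H. Let K be a compact operator and B₁ a bounded self-adjoint operator such that P_δ B₁ P_δ ≥ α P_δ² + P_δ K P_δ, where P_δ is the spectral projection of H onto [ω₀−δ, ω₀+δ]. Then there exists δ > 0 such that P_δ B₁ P_δ ≥ (α/2) P_δ². -/
open scoped InnerProductSpace

/-- If `ω₀` is not an eigenvalue of `H`, the spectral projections
`P δ` of `H` onto `[ω₀−δ, ω₀+δ]` tend strongly to `0` as `δ → 0⁺` (this is taken as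
the characterizing hypothesis here); if `K` is compact and the quadratic-form
inequality `P_δ B₁ P_δ ≥ α P_δ² + P_δ K P_δ` holds for all small `δ`, then for
`δ` small enough `P_δ B₁ P_δ ≥ (α/2) P_δ²`. -/
theorem spectral_projection_mourre_absorption
    {E : Type*} [NormedAddCommGroup E] [InnerProductSpace ℂ E] [CompleteSpace E]
    (H B₁ K : E →L[ℂ] E) (hH : IsSelfAdjoint H) (hB₁ : IsSelfAdjoint B₁)
    (hK : IsCompactOperator K)
    (δ₀ α : ℝ) (hδ₀ : 0 < δ₀) (hα : 0 < α)
    (P : ℝ → (E →L[ℂ] E))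
    (hPsa : ∀ δ ∈ Set.Ioc 0 δ₀, IsSelfAdjoint (P δ))
    (hPproj : ∀ δ ∈ Set.Ioc 0 δ₀, (P δ) ∘L (P δ) = P δ)
    (hPcomm : ∀ δ ∈ Set.Ioc 0 δ₀, (P δ) ∘L H = H ∘L (P δ))
    -- strong convergence `P δ → 0` as `δ → 0⁺`, valid since `ω₀` is not an eigenvalue
    (hPto0 : ∀ φ : E,
      Filter.Tendsto (fun δ => P δ φ) (nhdsWithin 0 (Set.Ioi 0)) (nhds 0))
    (hineq : ∀ δ ∈ Set.Ioc 0 δ₀, ∀ φ : E,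
      α * ‖P δ φ‖ ^ 2 + (inner ℂ (P δ φ) (K (P δ φ)) : ℂ).re ≤
        (inner ℂ (P δ φ) (B₁ (P δ φ)) : ℂ).re) :
    ∃ δ ∈ Set.Ioc 0 δ₀, ∀ φ : E,
      (α / 2) * ‖P δ φ‖ ^ 2 ≤ (inner ℂ (P δ φ) (B₁ (P δ φ)) : ℂ).re := by
  classical
  set L := nhdsWithin (0 : ℝ) (Set.Ioi 0) with hL
  -- the closure of the image of the closed unit ball under K is compact
  have hS : IsCompact (closure (⇑K '' Metric.closedBall 0 1)) :=
    hK.isCompact_closure_image_closedBall 1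
  set S := closure (⇑K '' Metric.closedBall 0 1) with hSdef
  -- cover S by finitely many balls of radius α/4
  have hcover : S ⊆ ⋃ x ∈ S, Metric.ball x (α / 4) := by
    intro x hx
    exact Set.mem_biUnion hx (Metric.mem_ball_self (by linarith))
  obtain ⟨t, hts, htfin, htcover⟩ :=
    hS.elim_finite_subcover_image (fun x _ => Metric.isOpen_ball) hcover
  -- eventually along L, all centers have small image under P δ
  have hev1 : ∀ᶠ δ in L, ∀ x ∈ t, ‖P δ x‖ < α / 4 := by
    rw [Filter.eventually_all_finite htfin]
    intro x _
    have h0 : Filter.Tendsto (fun δ => ‖P δ x‖) L (nhds 0) := by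
      simpa using (hPto0 x).norm
    exact h0.eventually_lt_const (by linarith)
  have hev2 : ∀ᶠ δ in L, δ ∈ Set.Ioc 0 δ₀ := Ioc_mem_nhdsGT hδ₀
  have : ∀ᶠ δ in L, δ ∈ Set.Ioc 0 δ₀ ∧ ∀ x ∈ t, ‖P δ x‖ < α / 4 := hev2.and hev1
  obtain ⟨δ, hδmem, hδsmall⟩ := this.exists
  refine ⟨δ, hδmem, ?_⟩
  have hsym := (hPsa δ hδmem).isSymmetric
  have hproj : ∀ x, P δ (P δ x) = P δ x := fun x =>
    congrFun (congrArg DFunLike.coe (hPproj δ hδmem)) x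
  have habs : ∀ x y : E, |(inner ℂ x y : ℂ).re| ≤ ‖x‖ * ‖y‖ := by
    intro x y
    calc |(inner ℂ x y : ℂ).re| ≤ ‖(inner ℂ x y : ℂ)‖ :=
          Complex.abs_re_le_norm _
      _ = ‖(inner ℂ x y : ℂ)‖ := rfl
      _ ≤ ‖x‖ * ‖y‖ := norm_inner_le_norm x y
  -- norm bound : ‖P δ x‖ ≤ ‖x‖
  have hPnorm : ∀ x : E, ‖P δ x‖ ≤ ‖x‖ := by
    intro x
    have h1 : ‖P δ x‖ ^ 2 = (inner ℂ (P δ x) (P δ x) : ℂ).re := by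
      rw [InnerProductSpace.norm_sq_eq_re_inner (𝕜 := ℂ)]; rfl
    have h2 : (inner ℂ (P δ x) (P δ x) : ℂ) = inner ℂ x (P δ x) := by
      have h := hsym x (P δ x)
      simp only [ContinuousLinearMap.coe_coe] at h
      rw [h, hproj]
    have h3 : (inner ℂ x (P δ x) : ℂ).re ≤ ‖x‖ * ‖P δ x‖ :=
      le_trans (le_abs_self _) (habs x (P δ x))
    have h4 : ‖P δ x‖ ^ 2 ≤ ‖x‖ * ‖P δ x‖ := by rw [h1, h2]; exact h3
    rcases eq_or_lt_of_le (norm_nonneg (P δ x)) with h | h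
    · rw [← h]; exact norm_nonneg x
    · nlinarith
  -- key : ‖P δ (K ψ)‖ ≤ (α/2) ‖ψ‖
  have hkey : ∀ ψ : E, ‖P δ (K ψ)‖ ≤ α / 2 * ‖ψ‖ := by
    have hunit : ∀ ψ : E, ‖ψ‖ ≤ 1 → ‖P δ (K ψ)‖ ≤ α / 2 := by
      intro ψ hψ
      have hKψ : K ψ ∈ S := subset_closure ⟨ψ, by simpa using hψ, rfl⟩
      obtain ⟨x, hxt, hxball⟩ := Set.mem_iUnion₂.mp (htcover hKψ)
      have h1 : ‖P δ (K ψ - x)‖ ≤ ‖K ψ - x‖ := hPnorm _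
      have h2 : ‖K ψ - x‖ < α / 4 := by
        rw [← dist_eq_norm]; exact Metric.mem_ball.mp hxball
      have h3 : ‖P δ x‖ < α / 4 := hδsmall x hxt
      have h4 : P δ (K ψ) = P δ (K ψ - x) + P δ x := by
        rw [← map_add]; congr 1; abel
      calc ‖P δ (K ψ)‖ ≤ ‖P δ (K ψ - x)‖ + ‖P δ x‖ := by
            rw [h4]; exact norm_add_le _ _
        _ ≤ α / 4 + α / 4 := by linarith
        _ = α / 2 := by ring
    intro ψ
    rcases eq_or_ne ψ 0 with rfl | hψ0
    · simp
    · have hn : (0 : ℝ) < ‖ψ‖ := norm_pos_iff.mpr hψ0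
      have hns : ‖((‖ψ‖ : ℂ))⁻¹ • ψ‖ = 1 := by
        rw [norm_smul, norm_inv, Complex.norm_real, Real.norm_eq_abs,
          abs_of_pos hn, inv_mul_cancel₀ hn.ne']
      have := hunit (((‖ψ‖ : ℂ))⁻¹ • ψ) (le_of_eq hns)
      rw [map_smul, map_smul, norm_smul, norm_inv, Complex.norm_real,
        Real.norm_eq_abs, abs_of_pos hn] at this
      have h5 : ‖ψ‖⁻¹ * ‖P δ (K ψ)‖ ≤ α / 2 := this
      calc ‖P δ (K ψ)‖ = ‖ψ‖ * (‖ψ‖⁻¹ * ‖P δ (K ψ)‖) := by field_simp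
        _ ≤ ‖ψ‖ * (α / 2) := mul_le_mul_of_nonneg_left h5 hn.le
        _ = α / 2 * ‖ψ‖ := by ring
  -- conclude
  intro φ
  set ψ := P δ φ with hψdef
  have hψfix : P δ ψ = ψ := hproj φ
  have hKbound : -(α / 2 * ‖ψ‖ ^ 2) ≤ (inner ℂ ψ (K ψ) : ℂ).re := by
    have h : (inner ℂ ψ (K ψ) : ℂ) = inner ℂ ψ (P δ (K ψ)) := by
      have h := hsym ψ (K ψ)
      simp only [ContinuousLinearMap.coe_coe] at h
      rw [← h, hψfix]
    have h2 : |(inner ℂ ψ (P δ (K ψ)) : ℂ).re| ≤ ‖ψ‖ * ‖P δ (K ψ)‖ := habs _ _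
    have h3 : ‖ψ‖ * ‖P δ (K ψ)‖ ≤ ‖ψ‖ * (α / 2 * ‖ψ‖) :=
      mul_le_mul_of_nonneg_left (hkey ψ) (norm_nonneg ψ)
    have h4 : |(inner ℂ ψ (K ψ) : ℂ).re| ≤ α / 2 * ‖ψ‖ ^ 2 := by
      rw [h]
      calc |(inner ℂ ψ (P δ (K ψ)) : ℂ).re| ≤ ‖ψ‖ * (α / 2 * ‖ψ‖) :=
            le_trans h2 h3
        _ = α / 2 * ‖ψ‖ ^ 2 := by ring
    linarith [neg_abs_le ((inner ℂ ψ (K ψ) : ℂ).re)]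
  have hmain := hineq δ hδmem φ
  linarith
end

section
/- Let F : (0, ε₀] → B be a C¹ function with values in a Banach space B satisfying ‖F'(ε)‖ ≤ C ε^{s−3/2}(ε + ‖F(ε)‖)^{1/2} for some 1/2 < s < 1. Then ‖F(ε)‖ is uniformly bounded on (0, ε₀] and F(ε) converges in B as ε → 0⁺. -/
open Filter

/-- A `C¹` Banach-valued function on `(0, ε₀]` satisfying the differential inequality
`‖F'(ε)‖ ≤ C ε^{s−3/2} (ε + ‖F(ε)‖)^{1/2}` with `1/2 < s < 1` is uniformly bounded
and converges as `ε → 0⁺`. -/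
theorem differential_inequality_limit
    {B : Type*} [NormedAddCommGroup B] [NormedSpace ℝ B] [CompleteSpace B]
    (F F' : ℝ → B) (ε₀ C s : ℝ) (hε₀ : 0 < ε₀) (hC : 0 ≤ C)
    (hs : 1 / 2 < s) (hs' : s < 1)
    (hderiv : ∀ ε ∈ Set.Ioc 0 ε₀, HasDerivAt F (F' ε) ε)
    (hineq : ∀ ε ∈ Set.Ioc 0 ε₀,
      ‖F' ε‖ ≤ C * ε ^ (s - 3 / 2) * (ε + ‖F ε‖) ^ ((1:ℝ) / 2)) :
    (∃ M : ℝ, ∀ ε ∈ Set.Ioc 0 ε₀, ‖F ε‖ ≤ M) ∧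
    ∃ L : B, Tendsto F (nhdsWithin 0 (Set.Ioi 0)) (nhds L) := by
  set p : ℝ := s - 1/2 with hp
  have hp0 : 0 < p := by rw [hp]; linarith
  simp only [show s - 3/2 = p - 1 from by rw [hp]; ring] at hineq
  have h2s : (0:ℝ) < 2*s - 1 := by linarith
  set D : ℝ := C / (2*s - 1) with hD
  have hD0 : 0 ≤ D := div_nonneg hC h2s.le
  have hDC : 2 * D * p = C := by
    rw [hD, hp]; field_simp
  set R : ℝ := Real.sqrt (ε₀ + ‖F ε₀‖) with hR
  have hR0 : 0 ≤ R := Real.sqrt_nonneg _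
  set A : ℝ := R + D * ε₀ ^ p with hA
  have hAnn : 0 ≤ A := by
    have := mul_nonneg hD0 (Real.rpow_nonneg hε₀.le p)
    rw [hA]; linarith
  have hAsub : ∀ τ ∈ Set.Ioc 0 ε₀, R ≤ A - D * τ ^ p := by
    intro τ hτ
    have h1 : D * τ ^ p ≤ D * ε₀ ^ p :=
      mul_le_mul_of_nonneg_left (Real.rpow_le_rpow hτ.1.le hτ.2 hp0.le) hD0
    rw [hA]; linarith
  -- derivative of the barrier
  have hBderiv : ∀ x : ℝ, ε₀ - x ≠ 0 →
      HasDerivAt (fun t => (A - D * (ε₀ - t) ^ p)^2 - (ε₀ - t))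
        (C * (ε₀ - x) ^ (p-1) * (A - D * (ε₀ - x) ^ p) + 1) x := by
    intro x hne
    have h0 : HasDerivAt (fun t : ℝ => ε₀ - t) (-1) x := (hasDerivAt_id x).const_sub ε₀
    have h1 : HasDerivAt (fun t : ℝ => (ε₀ - t) ^ p) (p * (ε₀ - x) ^ (p-1) * (-1)) x :=
      (Real.hasDerivAt_rpow_const (x := ε₀ - x) (Or.inl hne)).comp x h0
    have h3 := (((h1.const_mul D).const_sub A).pow 2).sub h0
    refine h3.congr_deriv ?_
    rw [← hDC]; push_cast; ring
  -- the key Gronwall-type bound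
  have key : ∀ ε ∈ Set.Ioc 0 ε₀, ε + ‖F ε‖ ≤ (A - D * ε ^ p)^2 := by
    intro ε hε
    obtain ⟨hε1, hε2⟩ := hε
    have hsub : ∀ t ∈ Set.Icc (0:ℝ) (ε₀ - ε), ε₀ - t ∈ Set.Ioc 0 ε₀ := by
      intro t ht
      exact ⟨by linarith [ht.2], by linarith [ht.1]⟩
    set g : ℝ → B := fun t => F (ε₀ - t) with hg
    set g' : ℝ → B := fun t => (-1 : ℝ) • F' (ε₀ - t) with hg'
    have hgd : ∀ t ∈ Set.Icc (0:ℝ) (ε₀ - ε), HasDerivAt g (g' t) t := by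
      intro t ht
      exact HasDerivAt.scomp t (hderiv _ (hsub t ht)) ((hasDerivAt_id t).const_sub ε₀)
    set Bf : ℝ → ℝ := fun t => (A - D * (ε₀ - t) ^ p)^2 - (ε₀ - t) with hBf
    set Bf' : ℝ → ℝ := fun t => C * (ε₀ - t) ^ (p-1) * (A - D * (ε₀ - t) ^ p) + 1 with hBf'
    have hne : ∀ t ∈ Set.Icc (0:ℝ) (ε₀ - ε), ε₀ - t ≠ 0 := by
      intro t ht
      have := (hsub t ht).1; exact ne_of_gt this
    have hcont : ContinuousOn g (Set.Icc 0 (ε₀ - ε)) :=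
      fun t ht => ((hgd t ht).continuousAt).continuousWithinAt
    have hgd' : ∀ t ∈ Set.Ico (0:ℝ) (ε₀ - ε), HasDerivWithinAt g (g' t) (Set.Ici t) t :=
      fun t ht => (hgd t (Set.Ico_subset_Icc_self ht)).hasDerivWithinAt
    have ha : ‖g 0‖ ≤ Bf 0 := by
      have h1 : (0:ℝ) ≤ ε₀ + ‖F ε₀‖ := by positivity
      simp only [hg, hBf, sub_zero, hA]
      rw [show R + D * ε₀ ^ p - D * ε₀ ^ p = R by ring, hR, Real.sq_sqrt h1]
      linarith
    have hBcont : ContinuousOn Bf (Set.Icc 0 (ε₀ - ε)) :=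
      fun t ht => (hBderiv t (hne t ht)).continuousAt.continuousWithinAt
    have hB' : ∀ t ∈ Set.Ico (0:ℝ) (ε₀ - ε), HasDerivWithinAt Bf (Bf' t) (Set.Ici t) t :=
      fun t ht => (hBderiv t (hne t (Set.Ico_subset_Icc_self ht))).hasDerivWithinAt
    have hbd : ∀ t ∈ Set.Ico (0:ℝ) (ε₀ - ε), ‖g t‖ = Bf t → ‖g' t‖ < Bf' t := by
      intro t ht heq
      have hτ := hsub t (Set.Ico_subset_Icc_self ht)
      have hpos : 0 ≤ A - D * (ε₀ - t) ^ p := le_trans hR0 (hAsub _ hτ)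
      have hsum : ε₀ - t + ‖F (ε₀ - t)‖ = (A - D * (ε₀ - t)^p)^2 := by
        simp only [hg, hBf] at heq; linarith
      have h1 : ‖g' t‖ = ‖F' (ε₀ - t)‖ := by simp [hg', norm_smul]
      have h2 := hineq _ hτ
      rw [hsum] at h2
      have h3 : ((A - D * (ε₀ - t)^p)^2) ^ ((1:ℝ)/2) = A - D * (ε₀ - t)^p := by
        rw [← Real.sqrt_eq_rpow, Real.sqrt_sq hpos]
      rw [h3] at h2
      simp only [hBf']
      rw [h1]; linarith
    have hfin := image_norm_le_of_norm_deriv_right_lt_deriv_boundary'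
      hcont hgd' ha hBcont hB' hbd (Set.right_mem_Icc.2 (by linarith))
    simp only [hg, hBf, show ε₀ - (ε₀ - ε) = ε by ring] at hfin
    linarith
  have hM : ∀ ε ∈ Set.Ioc 0 ε₀, ε + ‖F ε‖ ≤ A^2 := by
    intro ε hε
    have h1 := key ε hε
    have h2 := hAsub ε hε
    have h3 : 0 ≤ A - D*ε^p := le_trans hR0 h2
    have h4 : 0 ≤ D * ε^p := mul_nonneg hD0 (Real.rpow_nonneg hε.1.le p)
    nlinarith
  refine ⟨⟨A^2, fun ε hε => by have := hM ε hε; linarith [hε.1]⟩, ?_⟩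
  -- part 2 : convergence
  set K : ℝ := C * A with hK
  have hK0 : 0 ≤ K := mul_nonneg hC hAnn
  have hKp0 : 0 ≤ K / p := div_nonneg hK0 hp0.le
  have hstep : ∀ a b : ℝ, 0 < a → a ≤ b → b ≤ ε₀ →
      ‖F b - F a‖ ≤ (K/p) * (b^p - a^p) := by
    intro a b ha0 hab hbε₀
    have hsub : ∀ t ∈ Set.Icc a b, t ∈ Set.Ioc 0 ε₀ := by
      intro t ht; exact ⟨lt_of_lt_of_le ha0 ht.1, le_trans ht.2 hbε₀⟩
    have hBd : ∀ t : ℝ, 0 < t → HasDerivAt (fun u : ℝ => (K/p) * (u^p - a^p)) (K * t^(p-1)) t := by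
      intro t ht
      have h1 := ((Real.hasDerivAt_rpow_const (x := t) (p := p)
        (Or.inl (ne_of_gt ht))).sub_const (a^p)).const_mul (K/p)
      refine h1.congr_deriv ?_
      rw [← mul_assoc, div_mul_cancel₀ _ hp0.ne']
    have hcont : ContinuousOn (fun t => F t - F a) (Set.Icc a b) :=
      fun t ht => (((hderiv t (hsub t ht)).sub_const (F a)).continuousAt).continuousWithinAt
    have hder : ∀ t ∈ Set.Ico a b, HasDerivWithinAt (fun t => F t - F a) (F' t) (Set.Ici t) t :=
      fun t ht => ((hderiv t (hsub t (Set.Ico_subset_Icc_self ht))).sub_const (F a)).hasDerivWithinAt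
    have hBc : ContinuousOn (fun u : ℝ => (K/p) * (u^p - a^p)) (Set.Icc a b) :=
      fun t ht => (hBd t (lt_of_lt_of_le ha0 ht.1)).continuousAt.continuousWithinAt
    have hB'' : ∀ t ∈ Set.Ico a b,
        HasDerivWithinAt (fun u : ℝ => (K/p) * (u^p - a^p)) (K * t^(p-1)) (Set.Ici t) t :=
      fun t ht => (hBd t (lt_of_lt_of_le ha0 ht.1)).hasDerivWithinAt
    have hbd : ∀ t ∈ Set.Ico a b, ‖F' t‖ ≤ K * t^(p-1) := by
      intro t ht
      have hτ : t ∈ Set.Ioc 0 ε₀ := hsub t (Set.Ico_subset_Icc_self ht)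
      have h2 := hineq t hτ
      have h3 : (t + ‖F t‖) ^ ((1:ℝ)/2) ≤ A := by
        calc (t + ‖F t‖) ^ ((1:ℝ)/2) ≤ (A^2) ^ ((1:ℝ)/2) :=
          Real.rpow_le_rpow (add_nonneg hτ.1.le (norm_nonneg _)) (hM t hτ) (by norm_num)
        _ = A := by rw [← Real.sqrt_eq_rpow, Real.sqrt_sq hAnn]
      calc ‖F' t‖ ≤ C * t^(p-1) * (t + ‖F t‖)^((1:ℝ)/2) := h2
        _ ≤ C * t^(p-1) * A :=
            mul_le_mul_of_nonneg_left h3 (mul_nonneg hC (Real.rpow_nonneg hτ.1.le _))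
        _ = K * t^(p-1) := by rw [hK]; ring
    have hfin := image_norm_le_of_norm_deriv_right_le_deriv_boundary'
      hcont hder (by simp) hBc hB'' hbd (Set.right_mem_Icc.2 hab)
    simpa using hfin
  have hcauchy : Cauchy (map F (nhdsWithin 0 (Set.Ioi 0))) := by
    rw [Metric.cauchy_iff]
    refine ⟨map_neBot, fun η hη => ?_⟩
    have h2 : Tendsto (fun δ : ℝ => (K/p) * δ ^ p) (nhds 0) (nhds ((K/p) * (0:ℝ)^p)) :=
      tendsto_const_nhds.mul (Real.continuousAt_rpow_const 0 p (Or.inr hp0.le))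
    rw [Real.zero_rpow hp0.ne', mul_zero] at h2
    have h4 : ∀ᶠ x in nhds (0:ℝ), (K/p) * x^p < η := h2.eventually_lt_const hη
    rw [Metric.eventually_nhds_iff] at h4
    obtain ⟨ρ, hρ0, hρ⟩ := h4
    set δ : ℝ := min (ρ/2) ε₀ with hδ
    have hδ0 : 0 < δ := lt_min (by linarith) hε₀
    have hδε₀ : δ ≤ ε₀ := min_le_right _ _
    have hδη : (K/p) * δ^p < η := by
      apply hρ
      rw [Real.dist_eq, sub_zero, abs_of_pos hδ0]
      calc δ ≤ ρ/2 := min_le_left _ _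
        _ < ρ := by linarith
    have hpair : ∀ a b : ℝ, a ∈ Set.Ioc 0 δ → b ∈ Set.Ioc 0 δ → a ≤ b →
        dist (F a) (F b) < η := by
      intro a b ha hb hab
      calc dist (F a) (F b) = ‖F b - F a‖ := by rw [dist_eq_norm, norm_sub_rev]
        _ ≤ (K/p) * (b^p - a^p) := hstep a b ha.1 hab (hb.2.trans hδε₀)
        _ ≤ (K/p) * δ^p := by
            have h1 : b^p ≤ δ^p := Real.rpow_le_rpow hb.1.le hb.2 hp0.le
            have h2 : 0 ≤ a^p := Real.rpow_nonneg ha.1.le p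
            apply mul_le_mul_of_nonneg_left _ hKp0
            linarith
        _ < η := hδη
    refine ⟨F '' Set.Ioc 0 δ, ?_, ?_⟩
    · rw [mem_map]
      exact mem_of_superset (Ioc_mem_nhdsGT hδ0)
        (Set.subset_preimage_image F _)
    · rintro x ⟨a, ha, rfl⟩ y ⟨b, hb, rfl⟩
      rcases le_total a b with h | h
      · exact hpair a b ha hb h
      · rw [dist_comm]; exact hpair b a hb ha h
  obtain ⟨L, hL⟩ := CompleteSpace.complete hcauchy
  exact ⟨L, hL⟩
end

section
/- Let F : (0, ε₀] × Ω → B (Ω ⊂ ℂ open) satisfy: F(·, z) extends continuously to ε = 0 with ‖F(ε,z) − F(0,z)‖ ≤ Cε^{2s−1}, and ‖∂F/∂z(ε,z)‖ ≤ C/ε, uniformly for z, z' ∈ Ω. Then z ↦ F(0,z) is Hölder continuous with exponent μ = (2s−1)/(2s): ‖F(0,z) − F(0,z')‖ ≤ C'|z − z'|^{(2s−1)/(2s)}. -/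
/-- If `F(ε,·)` converges to `F(0,·)` at rate `ε^{2s−1}` and the `z`-derivative of
`F(ε,·)` is bounded by `C/ε` on a bounded convex set `Ω`, then `z ↦ F(0,z)` is Hölder
continuous with exponent `μ = (2s−1)/(2s)` (optimize `ε^{2s} = |z−z'|`). -/
theorem hoelder_continuity_boundary_values
    {B : Type*} [NormedAddCommGroup B] [NormedSpace ℂ B]
    (Ω : Set ℂ) (hΩopen : IsOpen Ω) (hΩconv : Convex ℝ Ω)
    (hΩbdd : Bornology.IsBounded Ω)
    (F : ℝ → ℂ → B) (F' : ℝ → ℂ → B) (ε₀ C s : ℝ)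
    (hε₀ : 0 < ε₀) (hC : 0 ≤ C) (hs : 1 / 2 < s) (hs' : s < 1)
    (hconv : ∀ z ∈ Ω, ∀ ε ∈ Set.Ioc 0 ε₀, ‖F ε z - F 0 z‖ ≤ C * ε ^ (2 * s - 1))
    (hderiv : ∀ ε ∈ Set.Ioc 0 ε₀, ∀ z ∈ Ω, HasDerivAt (F ε) (F' ε z) z)
    (hderiv_bound : ∀ ε ∈ Set.Ioc 0 ε₀, ∀ z ∈ Ω, ‖F' ε z‖ ≤ C / ε) :
    ∃ C' : ℝ, ∀ z ∈ Ω, ∀ z' ∈ Ω,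
      ‖F 0 z - F 0 z'‖ ≤ C' * ‖z - z'‖ ^ ((2 * s - 1) / (2 * s)) := by
  obtain ⟨D, hD⟩ := Metric.isBounded_iff.mp hΩbdd
  have h2s : (0:ℝ) < 2 * s := by linarith
  have h2s1 : (0:ℝ) < 2 * s - 1 := by linarith
  set μ := (2 * s - 1) / (2 * s) with hμ
  have hμpos : 0 < μ := div_pos h2s1 h2s
  set K : ℝ := max 1 (D ^ (1 / (2 * s)) / ε₀) with hK
  have hK1 : (1:ℝ) ≤ K := le_max_left _ _
  refine ⟨C * (2 + K), fun z hz z' hz' => ?_⟩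
  set d : ℝ := ‖z - z'‖ with hd
  have hd0 : 0 ≤ d := norm_nonneg _
  rcases eq_or_lt_of_le hd0 with h0 | hdpos
  · -- z = z'
    have hzz : z = z' := sub_eq_zero.mp (norm_eq_zero.mp h0.symm)
    rw [hzz, sub_self, norm_zero]
    exact mul_nonneg (mul_nonneg hC (by linarith)) (Real.rpow_nonneg (norm_nonneg _) _)
  · -- main case
    set ε : ℝ := min ε₀ (d ^ (1 / (2 * s))) with hε
    have hdp : 0 < d ^ (1 / (2 * s)) := Real.rpow_pos_of_pos hdpos _
    have hεpos : 0 < ε := lt_min hε₀ hdp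
    have hεmem : ε ∈ Set.Ioc 0 ε₀ := ⟨hεpos, min_le_left _ _⟩
    -- middle term
    have hmid : ‖F ε z - F ε z'‖ ≤ (C / ε) * ‖z - z'‖ :=
      hΩconv.norm_image_sub_le_of_norm_hasDerivWithin_le
        (fun x hx => (hderiv ε hεmem x hx).hasDerivWithinAt)
        (fun x hx => hderiv_bound ε hεmem x hx) hz' hz
    have houter1 := hconv z hz ε hεmem
    have houter2 := hconv z' hz' ε hεmem
    have htri : ‖F 0 z - F 0 z'‖ ≤
        ‖F ε z - F 0 z‖ + ‖F ε z - F ε z'‖ + ‖F ε z' - F 0 z'‖ := by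
      have heq : F 0 z - F 0 z' = -(F ε z - F 0 z) + (F ε z - F ε z') + (F ε z' - F 0 z') := by
        abel
      rw [heq]
      refine le_trans (norm_add_le _ _) (add_le_add ?_ le_rfl)
      refine le_trans (norm_add_le _ _) (add_le_add ?_ le_rfl)
      rw [norm_neg]
    -- ε^{2s-1} ≤ d^μ
    have hεle : ε ≤ d ^ (1 / (2 * s)) := min_le_right _ _
    have hexp : (1 / (2 * s)) * (2 * s - 1) = μ := by
      rw [hμ]; field_simp
    have hpow1 : ε ^ (2 * s - 1) ≤ d ^ μ := by
      calc ε ^ (2 * s - 1) ≤ (d ^ (1 / (2 * s))) ^ (2 * s - 1) :=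
            Real.rpow_le_rpow hεpos.le hεle h2s1.le
        _ = d ^ μ := by rw [← Real.rpow_mul hd0, hexp]
    -- d/ε ≤ K * d^μ
    have hsum : μ + 1 / (2 * s) = 1 := by rw [hμ]; field_simp; ring
    have hdsplit : d = d ^ μ * d ^ (1 / (2 * s)) := by
      rw [← Real.rpow_add hdpos, hsum, Real.rpow_one]
    have hratio : d ^ (1 / (2 * s)) / ε ≤ K := by
      rcases le_total (d ^ (1 / (2 * s))) ε₀ with hcase | hcase
      · have hεeq : ε = d ^ (1 / (2 * s)) := min_eq_right hcase
        rw [hεeq, div_self hdp.ne']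
        exact hK1
      · have hεeq : ε = ε₀ := min_eq_left hcase
        rw [hεeq]
        refine le_trans ?_ (le_max_right _ _)
        have hdD : d ≤ D := by
          have := hD hz hz'
          rwa [dist_eq_norm] at this
        gcongr
    have hpow2 : d / ε ≤ K * d ^ μ := by
      have : d / ε = d ^ μ * (d ^ (1 / (2 * s)) / ε) := by
        rw [← mul_div_assoc, ← hdsplit]
      rw [this, mul_comm K]
      exact mul_le_mul_of_nonneg_left hratio (Real.rpow_nonneg hd0 _)
    calc ‖F 0 z - F 0 z'‖ ≤ ‖F ε z - F 0 z‖ + ‖F ε z - F ε z'‖ + ‖F ε z' - F 0 z'‖ := htri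
      _ ≤ C * ε ^ (2 * s - 1) + (C / ε) * d + C * ε ^ (2 * s - 1) :=
          add_le_add (add_le_add houter1 hmid) houter2
      _ = 2 * (C * ε ^ (2 * s - 1)) + C * (d / ε) := by
          field_simp; ring
      _ ≤ 2 * (C * d ^ μ) + C * (K * d ^ μ) := by
          refine add_le_add ?_ (mul_le_mul_of_nonneg_left hpow2 hC)
          have := mul_le_mul_of_nonneg_left hpow1 hC; linarith
      _ = C * (2 + K) * d ^ μ := by ring
end
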